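/- There is a universal constant C > 0 with the following property. Let d be an even positive integer, let δ ≤ d/4, let a and L be positive integers with d = aL and 1 ≤ a < δ, let m_1,…,m_{2δ−1} be the two-shot masks, and let 0 < p ≤ q. Suppose A : ℝ^{(2δ−1)×L} → ℂ^d satisfies d₁(A(y), A(y′)) ≤ C_A‖y − y′‖₂ for all y, y′ and A(Y(x)) ∼ x for every x ∈ C_{p,q}. Then C_A ≥ C·q·d·√a / (p·δ). -/

import Mathlib

open scoped BigOperators

noncomputable section

/-- Map an integer to `Fin d` by reduction mod `d` (requires `0 < d`). -/
def intToFin (d : ℕ) (hd : 0 < d) (z : ℤ) : Fin d :=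
  ⟨(z % (d : ℤ)).toNat, by
    have h1 : 0 ≤ z % (d : ℤ) := Int.emod_nonneg z (by exact_mod_cast hd.ne')
    have h2 : z % (d : ℤ) < (d : ℤ) := Int.emod_lt_of_pos z (by exact_mod_cast hd)
    omega⟩

/-- Circular shift: `(S_ℓ x)(n) = x(((n + ℓ - 1) mod d) + 1)` in 1-based indexing. -/
def shift {d : ℕ} (ℓ : ℤ) (x : Fin d → ℂ) : Fin d → ℂ :=
  fun i => x (intToFin d i.pos ((i : ℤ) + ℓ))

/-- `⟨u,v⟩ = ∑ u(n) conj(v(n))`. -/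
def innerC {d : ℕ} (u v : Fin d → ℂ) : ℂ := ∑ n, u n * (starRingEnd ℂ) (v n)

/-- `x ∼ x'` iff `x = e^{iθ} x'` for some real `θ`. -/
def phaseEquiv {d : ℕ} (x x' : Fin d → ℂ) : Prop :=
  ∃ θ : ℝ, x = fun n => Complex.exp (θ * Complex.I) * x' n

/-- Euclidean norm on `ℂ^d`. -/
def norm2 {d : ℕ} (x : Fin d → ℂ) : ℝ := Real.sqrt (∑ n, ‖x n‖ ^ 2)

/-- `D₂(x,x') = min_θ ‖x - e^{iθ} x'‖₂`. -/
def D2 {d : ℕ} (x x' : Fin d → ℂ) : ℝ :=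
  ⨅ θ : ℝ, norm2 (fun n => x n - Complex.exp (θ * Complex.I) * x' n)

/-- `C_{p,q} = {x : p ≤ |x(n)| ≤ q for all n}`. -/
def Cpq (d : ℕ) (p q : ℝ) : Set (Fin d → ℂ) :=
  {x | ∀ n, p ≤ ‖x n‖ ∧ ‖x n‖ ≤ q}

/-- `‖m‖_∞ = max_k ‖m_k‖_∞`. -/
def maskSup {d K : ℕ} (m : Fin K → Fin d → ℂ) : ℝ :=
  ⨆ k, ⨆ n, ‖m k n‖

/-- The measurement map `Z(x)_{k,ℓ} = |⟨S_{ℓa} m_k, x⟩|`, `1 ≤ k ≤ K`, `1 ≤ ℓ ≤ L`. -/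
def Zmap {d K : ℕ} (L : ℕ) (m : Fin K → Fin d → ℂ) (a : ℕ) (x : Fin d → ℂ) :
    EuclideanSpace ℝ (Fin K × Fin L) :=
  WithLp.toLp 2 fun kl => ‖innerC (shift ((((kl.2 : ℕ) + 1) * a : ℕ) : ℤ) (m kl.1)) x‖

/-- The measurement map `Y(x)_{k,ℓ} = |⟨S_{ℓa} m_k, x⟩|²`. -/
def Ymap {d K : ℕ} (L : ℕ) (m : Fin K → Fin d → ℂ) (a : ℕ) (x : Fin d → ℂ) :
    EuclideanSpace ℝ (Fin K × Fin L) :=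
  WithLp.toLp 2 fun kl => ‖innerC (shift ((((kl.2 : ℕ) + 1) * a : ℕ) : ℤ) (m kl.1)) x‖ ^ 2

/-- The vectors `x^{±}` (sign `ε = ±1`): `q` on positions `1,…,d/2-δ`, `p` on
`d/2-δ+1,…,d/2`, `±q` on `d/2+1,…,d-δ`, and `p` on `d-δ+1,…,d`. -/
def xpm (d δ : ℕ) (p q ε : ℝ) : Fin d → ℂ :=
  fun i => if (i : ℕ) < d / 2 - δ then (q : ℂ)
    else if (i : ℕ) < d / 2 then (p : ℂ)
    else if (i : ℕ) < d - δ then ((ε * q : ℝ) : ℂ)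
    else (p : ℂ)

/-- The difference of outer products `x x^* - x' x'^*`. -/
def outerDiff {d : ℕ} (x x' : Fin d → ℂ) : Matrix (Fin d) (Fin d) ℂ :=
  Matrix.of fun i j => x i * star (x j) - x' i * star (x' j)

lemma outerDiff_isHermitian {d : ℕ} (x x' : Fin d → ℂ) :
    (outerDiff x x').IsHermitian := by
  unfold Matrix.IsHermitian
  ext i j
  simp [outerDiff, Matrix.conjTranspose_apply, star_sub, star_mul, star_star, mul_comm]

/-- `d₁(x,x') = ‖x x^* - x' x'^*‖₁`, the sum of the singular values (for a Hermitian
matrix, the sum of the absolute values of its eigenvalues). -/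
def d1 {d : ℕ} (x x' : Fin d → ℂ) : ℝ :=
  ∑ i, |(outerDiff_isHermitian x x').eigenvalues i|

/-- The two-shot masks: `m_1 = e_1`, `m_{2j} = e_1 + e_{j+1}`, `m_{2j+1} = e_1 + i e_{j+1}`
for `1 ≤ j ≤ δ - 1` (the index `k : Fin (2δ-1)` stands for the mask `m_{k+1}`). -/
def twoShotMask (d δ : ℕ) : Fin (2 * δ - 1) → Fin d → ℂ :=
  fun k n =>
    if (k : ℕ) = 0 then (if (n : ℕ) = 0 then 1 else 0)
    else if (k : ℕ) % 2 = 1 then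
      (if (n : ℕ) = 0 then 1 else if (n : ℕ) = ((k : ℕ) + 1) / 2 then 1 else 0)
    else (if (n : ℕ) = 0 then 1 else if (n : ℕ) = (k : ℕ) / 2 then Complex.I else 0)


-- AUX START
section Aux

lemma coe_intToFin (d : ℕ) (hd : 0 < d) (z : ℤ) :
    ((intToFin d hd z : Fin d) : ℤ) = z % d := by
  simp only [intToFin]
  exact Int.toNat_of_nonneg (Int.emod_nonneg z (by exact_mod_cast hd.ne'))

lemma intToFin_eq_intToFin (d : ℕ) (hd : 0 < d) {z w : ℤ} (h : z % d = w % d) :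
    intToFin d hd z = intToFin d hd w := by
  apply Fin.ext
  simp only [intToFin, h]

lemma intToFin_add (d : ℕ) (hd : 0 < d) (z w : ℤ) :
    intToFin d hd ((intToFin d hd z : ℤ) + w) = intToFin d hd (z + w) := by
  apply intToFin_eq_intToFin
  rw [coe_intToFin]
  conv_rhs => rw [Int.add_emod]
  rw [Int.add_emod (z % d)]
  simp [Int.emod_emod_of_dvd]

lemma intToFin_coe (d : ℕ) (hd : 0 < d) (i : Fin d) :
    intToFin d hd (i : ℤ) = i := by
  apply Fin.ext
  simp only [intToFin]
  have : ((i:ℤ) % d) = (i:ℤ) := Int.emod_eq_of_lt (by positivity) (by exact_mod_cast i.2)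
  omega

lemma intToFin_sub_self (d : ℕ) (hd : 0 < d) (z : ℤ) (s : ℤ) :
    intToFin d hd ((intToFin d hd (z + s) : ℤ) - s) = intToFin d hd z := by
  rw [sub_eq_add_neg, intToFin_add]
  congr 1
  ring

lemma intToFin_val (d : ℕ) (hd : 0 < d) (z : ℤ) (m : ℕ) (hmd : m < d)
    (t : ℤ) (h : z = m + d * t) : ((intToFin d hd z : Fin d) : ℕ) = m := by
  subst h
  simp only [intToFin]
  rw [Int.add_mul_emod_self_left, Int.emod_eq_of_lt (by positivity) (by exact_mod_cast hmd)]
  omega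

/-- reindexing equiv -/
def shiftEquiv' (d : ℕ) (hd : 0 < d) (s : ℤ) : Fin d ≃ Fin d where
  toFun n := intToFin d hd ((n : ℤ) + s)
  invFun m := intToFin d hd ((m : ℤ) - s)
  left_inv n := by
    show intToFin d hd ((intToFin d hd ((n:ℤ) + s) : ℤ) - s) = n
    rw [intToFin_sub_self, intToFin_coe]
  right_inv m := by
    show intToFin d hd ((intToFin d hd ((m:ℤ) - s) : ℤ) + s) = m
    rw [intToFin_add, sub_add_cancel, intToFin_coe]

lemma innerC_shift {d : ℕ} (hd : 0 < d) (s : ℤ) (u x : Fin d → ℂ) :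
    innerC (shift s u) x = innerC u (fun m => x (intToFin d hd ((m : ℤ) - s))) := by
  show _ = ∑ m, u m * (starRingEnd ℂ) (x (intToFin d hd ((m : ℤ) - s)))
  rw [show (∑ m, u m * (starRingEnd ℂ) (x (intToFin d hd ((m : ℤ) - s))))
      = ∑ n, u ((shiftEquiv' d hd s) n) *
          (starRingEnd ℂ) (x (intToFin d hd (((shiftEquiv' d hd s) n : ℤ) - s)))
      from (Equiv.sum_comp _ _).symm]
  unfold innerC shift
  apply Finset.sum_congr rfl
  intro n _
  have h2 : intToFin d hd (((shiftEquiv' d hd s) n : ℤ) - s) = n :=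
    (shiftEquiv' d hd s).left_inv n
  rw [h2]
  rfl

lemma sum_two_point {d : ℕ} (z0 z1 : Fin d) (hne : z0 ≠ z1) (c0 c1 : ℂ) (f : Fin d → ℂ)
    (u : Fin d → ℂ) (hu : ∀ n, u n = (if n = z0 then c0 else 0) + (if n = z1 then c1 else 0)) :
    ∑ n, u n * f n = c0 * f z0 + c1 * f z1 := by
  clear hne
  simp only [hu, add_mul, ite_mul, zero_mul]
  rw [Finset.sum_add_distrib, Finset.sum_ite_eq' Finset.univ z0 (fun n => c0 * f n),
    Finset.sum_ite_eq' Finset.univ z1 (fun n => c1 * f n)]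
  simp

section masks
variable {d δ : ℕ} (hd : 0 < d)

lemma innerC_mask_zero (hd2 : 1 < d) (k : Fin (2*δ-1)) (hk : (k:ℕ) = 0) (y : Fin d → ℂ) :
    innerC (twoShotMask d δ k) y = (starRingEnd ℂ) (y ⟨0, hd⟩) := by
  unfold innerC
  rw [sum_two_point ⟨0, hd⟩ ⟨1, hd2⟩ (by simp [Fin.ext_iff]) 1 0 _ (twoShotMask d δ k)]
  · simp
  · intro n
    simp only [twoShotMask, hk, if_pos rfl]
    by_cases h : n = ⟨0, hd⟩
    · subst h; simp
    · have : (n:ℕ) ≠ 0 := by simpa [Fin.ext_iff] using h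
      simp [h, this, Fin.ext_iff]

lemma innerC_mask_odd (k : Fin (2*δ-1)) (hk : (k:ℕ) % 2 = 1) {j : ℕ} (hjdef : j = ((k:ℕ)+1)/2)
    (hjd : j < d) (y : Fin d → ℂ) :
    innerC (twoShotMask d δ k) y
      = (starRingEnd ℂ) (y ⟨0, hd⟩) + (starRingEnd ℂ) (y ⟨j, hjd⟩) := by
  unfold innerC
  have hj1 : 1 ≤ j := by omega
  rw [sum_two_point ⟨0, hd⟩ ⟨j, hjd⟩ (by simp [Fin.ext_iff]; omega) 1 1 _ (twoShotMask d δ k)]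
  · simp
  · intro n
    have hk0 : (k:ℕ) ≠ 0 := by omega
    simp only [twoShotMask, hk0, if_neg, hk, if_pos rfl, if_true, ← hjdef]
    by_cases h0 : n = ⟨0, hd⟩
    · subst h0; simp; omega
    · have h0' : (n:ℕ) ≠ 0 := by simpa [Fin.ext_iff] using h0
      by_cases hj : n = ⟨j, hjd⟩
      · subst hj; simp [h0']
      · have hj' : (n:ℕ) ≠ j := by simpa [Fin.ext_iff] using hj
        simp [h0', hj', h0, hj]

lemma innerC_mask_even (k : Fin (2*δ-1)) (hk0 : (k:ℕ) ≠ 0) (hk : (k:ℕ) % 2 = 0)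
    {j : ℕ} (hjdef : j = (k:ℕ)/2) (hjd : j < d) (y : Fin d → ℂ) :
    innerC (twoShotMask d δ k) y
      = (starRingEnd ℂ) (y ⟨0, hd⟩) + Complex.I * (starRingEnd ℂ) (y ⟨j, hjd⟩) := by
  unfold innerC
  have hj1 : 1 ≤ j := by omega
  rw [sum_two_point ⟨0, hd⟩ ⟨j, hjd⟩ (by simp [Fin.ext_iff]; omega) 1 Complex.I _ (twoShotMask d δ k)]
  · simp
  · intro n
    simp only [twoShotMask, hk0, if_neg, hk, ← hjdef]
    by_cases h0 : n = ⟨0, hd⟩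
    · subst h0; simp; omega
    · have h0' : (n:ℕ) ≠ 0 := by simpa [Fin.ext_iff] using h0
      by_cases hj : n = ⟨j, hjd⟩
      · subst hj; simp [h0']
      · have hj' : (n:ℕ) ≠ j := by simpa [Fin.ext_iff] using hj
        simp [h0', hj', h0, hj]

end masks

def rpm (d δ : ℕ) (p q ε : ℝ) : Fin d → ℝ :=
  fun i => if (i : ℕ) < d / 2 - δ then q
    else if (i : ℕ) < d / 2 then p
    else if (i : ℕ) < d - δ then ε * q
    else p

lemma xpm_eq (d δ : ℕ) (p q ε : ℝ) (i : Fin d) :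
    xpm d δ p q ε i = ((rpm d δ p q ε i : ℝ) : ℂ) := by
  unfold xpm rpm; split_ifs <;> norm_num

lemma rpm_sq (d δ : ℕ) (p q : ℝ) (i : Fin d) :
    (rpm d δ p q 1 i)^2 = (rpm d δ p q (-1) i)^2 := by
  unfold rpm; split_ifs <;> ring

lemma rpm_notB (d δ : ℕ) (p q : ℝ) (i : Fin d) (h : (i:ℕ) < d/2 ∨ d - δ ≤ (i:ℕ)) :
    rpm d δ p q 1 i = rpm d δ p q (-1) i := by
  unfold rpm; split_ifs <;> first | rfl | omega

lemma rpm_B (d δ : ℕ) (p q ε : ℝ) (i : Fin d) (h1 : d/2 ≤ (i:ℕ)) (h2 : (i:ℕ) < d - δ) :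
    rpm d δ p q ε i = ε * q := by
  unfold rpm; split_ifs <;> first | rfl | omega

lemma rpm_R1 (d δ : ℕ) (p q ε : ℝ) (i : Fin d) (h1 : (i:ℕ) < d/2 - δ) :
    rpm d δ p q ε i = q := by
  unfold rpm; split_ifs <;> first | rfl | omega

lemma rpm_R2 (d δ : ℕ) (p q ε : ℝ) (i : Fin d) (h1 : d/2 - δ ≤ (i:ℕ)) (h2 : (i:ℕ) < d/2)
    (hδ : 0 < δ) :
    rpm d δ p q ε i = p := by
  unfold rpm; split_ifs <;> first | rfl | omega

lemma rpm_R4 (d δ : ℕ) (p q ε : ℝ) (i : Fin d) (h4 : 4*δ ≤ d) (h1 : d - δ ≤ (i:ℕ)) :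
    rpm d δ p q ε i = p := by
  have := i.2
  unfold rpm; split_ifs <;> first | rfl | omega

lemma rpm_abs_le (d δ : ℕ) (p q ε : ℝ) (hp : 0 ≤ p) (hpq : p ≤ q) (hε : ε = 1 ∨ ε = -1)
    (i : Fin d) : |rpm d δ p q ε i| ≤ q := by
  unfold rpm
  rcases hε with rfl | rfl <;> split_ifs <;>
    rw [abs_le] <;> constructor <;> linarith

lemma abs_ofReal_add_sq (A B : ℝ) :
    ‖(A:ℂ) + (B:ℂ)‖ ^ 2 = (A + B)^2 := by
  rw [← Complex.ofReal_add, Complex.sq_norm, Complex.normSq_ofReal]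
  ring

lemma abs_ofReal_add_I_sq (A B : ℝ) :
    ‖(A:ℂ) + Complex.I * (B:ℂ)‖ ^ 2 = A^2 + B^2 := by
  rw [Complex.sq_norm, Complex.normSq_apply]
  simp
  ring

end Aux
section D1

lemma eigenvalues_congr {n : ℕ} {M N : Matrix (Fin n) (Fin n) ℂ} (h : M = N)
    (hM : M.IsHermitian) (hN : N.IsHermitian) : hM.eigenvalues = hN.eigenvalues := by
  subst h; rfl

lemma d1_phase {d : ℕ} (θ φ : ℝ) (x x' : Fin d → ℂ) :
    d1 (fun n => Complex.exp (θ * Complex.I) * x n)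
       (fun n => Complex.exp (φ * Complex.I) * x' n) = d1 x x' := by
  have key : ∀ ψ : ℝ, Complex.exp (ψ * Complex.I) * star (Complex.exp (ψ * Complex.I)) = 1 := by
    intro ψ
    rw [show (star (Complex.exp (ψ * Complex.I)) : ℂ)
        = (starRingEnd ℂ) (Complex.exp (ψ * Complex.I)) from rfl,
      Complex.mul_conj, Complex.normSq_eq_norm_sq, Complex.norm_exp_ofReal_mul_I]
    norm_num
  have hM : outerDiff (fun n => Complex.exp (θ * Complex.I) * x n)
      (fun n => Complex.exp (φ * Complex.I) * x' n) = outerDiff x x' := by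
    ext i j
    simp only [outerDiff, Matrix.of_apply, star_mul]
    have h1 : Complex.exp (θ * Complex.I) * x i * (star (x j) * star (Complex.exp (θ * Complex.I)))
        = (Complex.exp (θ * Complex.I) * star (Complex.exp (θ * Complex.I))) * (x i * star (x j)) := by
      ring
    have h2 : Complex.exp (φ * Complex.I) * x' i * (star (x' j) * star (Complex.exp (φ * Complex.I)))
        = (Complex.exp (φ * Complex.I) * star (Complex.exp (φ * Complex.I))) * (x' i * star (x' j)) := by
      ring
    rw [h1, h2, key, key]
    ring
  unfold d1
  rw [eigenvalues_congr hM (outerDiff_isHermitian _ _) (outerDiff_isHermitian _ _)]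

lemma sum_sq_eigenvalues {n : ℕ} (M : Matrix (Fin n) (Fin n) ℂ) (hM : M.IsHermitian) :
    ∑ i, (hM.eigenvalues i)^2 = ∑ i, ∑ j, Complex.normSq (M i j) := by
  have htr : (M * M).trace = ∑ i, ((hM.eigenvalues i : ℝ) : ℂ)^2 := by
    set U : Matrix (Fin n) (Fin n) ℂ := (hM.eigenvectorUnitary : Matrix (Fin n) (Fin n) ℂ) with hU
    set D : Matrix (Fin n) (Fin n) ℂ :=
      Matrix.diagonal (RCLike.ofReal ∘ hM.eigenvalues) with hD
    have hUU : star U * U = 1 := Matrix.mem_unitaryGroup_iff'.mp hM.eigenvectorUnitary.2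
    have hspec : M = U * D * star U := hM.spectral_theorem
    have : M * M = U * (D * D) * star U := by
      rw [hspec]
      calc U * D * star U * (U * D * star U) = U * D * (star U * U) * D * star U := by
            simp only [Matrix.mul_assoc]
      _ = U * (D * D) * star U := by rw [hUU]; simp only [Matrix.mul_one, Matrix.mul_assoc]
    rw [this, Matrix.trace_mul_cycle, ← Matrix.mul_assoc, hUU, Matrix.one_mul]
    rw [hD, Matrix.diagonal_mul_diagonal, Matrix.trace_diagonal]
    simp [pow_two]
  have hfr : (M * M).trace = ∑ i, ∑ j, ((Complex.normSq (M i j) : ℝ) : ℂ) := by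
    have hij : ∀ i j, M j i = (starRingEnd ℂ) (M i j) := by
      intro i j
      conv_lhs => rw [← hM]
      rfl
    unfold Matrix.trace
    apply Finset.sum_congr rfl
    intro i _
    rw [Matrix.diag_apply, Matrix.mul_apply]
    apply Finset.sum_congr rfl
    intro j _
    rw [hij i j, Complex.mul_conj]
  have := htr.symm.trans hfr
  have h2 : ((∑ i, (hM.eigenvalues i)^2 : ℝ) : ℂ) = ((∑ i, ∑ j, Complex.normSq (M i j) : ℝ) : ℂ) := by
    push_cast
    convert this using 2
  exact_mod_cast h2

lemma d1_ge_sqrt {d : ℕ} (x x' : Fin d → ℂ) :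
    Real.sqrt (∑ i, ∑ j, Complex.normSq (outerDiff x x' i j)) ≤ d1 x x' := by
  set lam := (outerDiff_isHermitian x x').eigenvalues with hlam
  have h1 : ∑ i, ∑ j, Complex.normSq (outerDiff x x' i j) = ∑ i, (lam i)^2 :=
    (sum_sq_eigenvalues _ _).symm
  have h2 : ∑ i, (lam i)^2 ≤ (∑ i, |lam i|)^2 := by
    calc ∑ i, (lam i)^2 = ∑ i, |lam i|^2 := by
          apply Finset.sum_congr rfl; intro i _; rw [sq_abs]
    _ ≤ (∑ i, |lam i|)^2 := Finset.sum_sq_le_sq_sum_of_nonneg (fun i _ => abs_nonneg _)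
  have h3 : (0:ℝ) ≤ ∑ i, |lam i| := Finset.sum_nonneg (fun i _ => abs_nonneg _)
  rw [h1]
  calc Real.sqrt (∑ i, (lam i)^2) ≤ Real.sqrt ((∑ i, |lam i|)^2) := Real.sqrt_le_sqrt h2
  _ = ∑ i, |lam i| := Real.sqrt_sq h3
end D1
section Count

lemma sum_indicator_real {α : Type*} [Fintype α] (P : α → Prop) [DecidablePred P] (c : ℝ) :
    ∑ i, (if P i then c else 0) = ((Finset.univ.filter P).card : ℝ) * c := by
  rw [← Finset.sum_filter, Finset.sum_const, nsmul_eq_mul]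

lemma card_filter_fin (d l r : ℕ) (hr : r ≤ d) :
    (Finset.univ.filter (fun i : Fin d => l ≤ (i:ℕ) ∧ (i:ℕ) < r)).card = r - l := by
  rw [← Nat.card_Ico l r]
  apply Finset.card_bij (fun (i : Fin d) _ => (i : ℕ))
  · intro i hi
    simp only [Finset.mem_filter, Finset.mem_univ, true_and] at hi
    simp only [Finset.mem_Ico]
    exact hi
  · intro i _ j _ h
    exact Fin.ext h
  · intro m hm
    simp only [Finset.mem_Ico] at hm
    exact ⟨⟨m, by omega⟩, by simp only [Finset.mem_filter, Finset.mem_univ, true_and]; exact hm, rfl⟩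

lemma count_window (d a L : ℕ) (ha : 0 < a) (hdal : d = a*L) (c r w : ℕ)
    (hw : 1 ≤ w) (hr : r ≤ c + w) :
    ((Finset.univ.filter
      (fun ℓ : Fin L => c ≤ d - ((ℓ:ℕ)+1)*a ∧ d - ((ℓ:ℕ)+1)*a < r)).card) ≤ (w-1)/a + 1 := by
  classical
  set T := (d - c)/a with hT
  set S := Finset.univ.filter
      (fun ℓ : Fin L => c ≤ d - ((ℓ:ℕ)+1)*a ∧ d - ((ℓ:ℕ)+1)*a < r) with hS
  have hsd : ∀ ℓ : Fin L, ((ℓ:ℕ)+1)*a ≤ d := by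
    intro ℓ
    calc ((ℓ:ℕ)+1)*a ≤ L*a := Nat.mul_le_mul_right a ℓ.2
    _ = a*L := Nat.mul_comm L a
    _ = d := hdal.symm
  have hkey : ∀ ℓ : Fin L, ℓ ∈ S → (ℓ:ℕ)+1 ≤ T := by
    intro ℓ hℓ
    rw [hS, Finset.mem_filter] at hℓ
    have h0 := hℓ.2.1
    have h1 := hsd ℓ
    rw [hT, Nat.le_div_iff_mul_le ha]
    omega
  have hbd : ∀ ℓ ∈ S, T - ((ℓ:ℕ)+1) ∈ Finset.range ((w-1)/a + 1) := by
    intro ℓ hℓ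
    have hℓT := hkey ℓ hℓ
    rw [hS, Finset.mem_filter] at hℓ
    rw [Finset.mem_range, Nat.lt_succ_iff, Nat.le_div_iff_mul_le ha, Nat.sub_mul]
    have e1 : T*a ≤ d - c := Nat.div_mul_le_self _ _
    have e2 : c ≤ d - ((ℓ:ℕ)+1)*a := hℓ.2.1
    have e3 : d - ((ℓ:ℕ)+1)*a < r := hℓ.2.2
    have e4 : ((ℓ:ℕ)+1)*a ≤ d := hsd ℓ
    generalize hu : T*a = u at e1 ⊢
    generalize hv : ((ℓ:ℕ)+1)*a = v at e2 e3 e4 ⊢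
    omega
  have hinj : Set.InjOn (fun ℓ : Fin L => T - ((ℓ:ℕ)+1)) S := by
    intro ℓ₁ h₁ ℓ₂ h₂ heq
    have k₁ := hkey ℓ₁ h₁
    have k₂ := hkey ℓ₂ h₂
    simp only at heq
    apply Fin.ext
    omega
  calc S.card ≤ (Finset.range ((w-1)/a + 1)).card :=
        Finset.card_le_card_of_injOn (fun ℓ => T - ((ℓ:ℕ)+1)) hbd hinj
  _ = (w-1)/a + 1 := Finset.card_range _

end Count

section Frob

lemma frob_lower (d δ : ℕ) (p q : ℝ) (hq : 0 < q) (heven : Even d) (hδd : 4*δ ≤ d)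
    (hδ : 0 < δ) :
    (q^2 * d / 2)^2
      ≤ ∑ i, ∑ j, Complex.normSq (outerDiff (xpm d δ p q 1) (xpm d δ p q (-1)) i j) := by
  obtain ⟨m2, hm2⟩ := heven
  have key : ∀ i j : Fin d,
      (if d/2 ≤ (i:ℕ) ∧ (i:ℕ) < d - δ then (if (j:ℕ) < d/2 - δ then (2*q^2)^2 else 0) else 0)
        ≤ Complex.normSq (outerDiff (xpm d δ p q 1) (xpm d δ p q (-1)) i j) := by
    intro i j
    split_ifs with h1 h2
    · have hval : outerDiff (xpm d δ p q 1) (xpm d δ p q (-1)) i j = ((2*q^2 : ℝ) : ℂ) := by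
        show xpm d δ p q 1 i * star (xpm d δ p q 1 j)
          - xpm d δ p q (-1) i * star (xpm d δ p q (-1) j) = _
        rw [xpm_eq, xpm_eq, xpm_eq, xpm_eq, Complex.star_def, Complex.conj_ofReal,
          Complex.conj_ofReal, rpm_B d δ p q 1 i h1.1 h1.2, rpm_B d δ p q (-1) i h1.1 h1.2,
          rpm_R1 d δ p q 1 j h2, rpm_R1 d δ p q (-1) j h2]
        push_cast
        ring
      rw [hval, Complex.normSq_ofReal]
      nlinarith [sq_nonneg q]
    · exact Complex.normSq_nonneg _
    · exact Complex.normSq_nonneg _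
  have hinner : ∑ j : Fin d, (if (j:ℕ) < d/2 - δ then (2*q^2)^2 else (0:ℝ))
      = ((d/2 - δ : ℕ) : ℝ) * (2*q^2)^2 := by
    rw [sum_indicator_real]
    congr 2
    have h := card_filter_fin d 0 (d/2 - δ) (by omega)
    rw [Nat.sub_zero] at h
    calc (Finset.univ.filter (fun j : Fin d => (j:ℕ) < d/2 - δ)).card
        = (Finset.univ.filter (fun j : Fin d => 0 ≤ (j:ℕ) ∧ (j:ℕ) < d/2 - δ)).card := by
          congr 1
          apply Finset.filter_congr
          intro i _
          simp
    _ = d/2 - δ := h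
  have hsum : ∑ i : Fin d, ∑ j : Fin d,
      (if d/2 ≤ (i:ℕ) ∧ (i:ℕ) < d - δ then (if (j:ℕ) < d/2 - δ then (2*q^2)^2 else 0) else 0)
      = ((d - δ - d/2 : ℕ) : ℝ) * (((d/2 - δ : ℕ) : ℝ) * (2*q^2)^2) := by
    calc ∑ i : Fin d, ∑ j : Fin d,
        (if d/2 ≤ (i:ℕ) ∧ (i:ℕ) < d - δ then (if (j:ℕ) < d/2 - δ then (2*q^2)^2 else 0) else 0)
        = ∑ i : Fin d, (if d/2 ≤ (i:ℕ) ∧ (i:ℕ) < d - δ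
            then (((d/2 - δ : ℕ) : ℝ) * (2*q^2)^2) else 0) := by
          apply Finset.sum_congr rfl
          intro i _
          by_cases h : d/2 ≤ (i:ℕ) ∧ (i:ℕ) < d - δ
          · simp only [if_pos h]
            exact hinner
          · simp only [if_neg h, Finset.sum_const_zero]
    _ = ((d - δ - d/2 : ℕ) : ℝ) * (((d/2 - δ : ℕ) : ℝ) * (2*q^2)^2) := by
          rw [sum_indicator_real, card_filter_fin d (d/2) (d - δ) (by omega)]
  have hle : ∑ i : Fin d, ∑ j : Fin d,
      (if d/2 ≤ (i:ℕ) ∧ (i:ℕ) < d - δ then (if (j:ℕ) < d/2 - δ then (2*q^2)^2 else 0) else 0)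
      ≤ ∑ i, ∑ j, Complex.normSq (outerDiff (xpm d δ p q 1) (xpm d δ p q (-1)) i j) :=
    Finset.sum_le_sum (fun i _ => Finset.sum_le_sum (fun j _ => key i j))
  rw [hsum] at hle
  refine le_trans ?_ hle
  have hB1 : (d - δ - d/2 : ℕ) = m2 - δ := by omega
  have hB2 : (d/2 - δ : ℕ) = m2 - δ := by omega
  rw [hB1, hB2]
  have hd4 : (d:ℝ) ≤ 4 * ((m2 - δ : ℕ) : ℝ) := by
    have : d ≤ 4 * (m2 - δ) := by omega
    exact_mod_cast this
  have hB0 : (0:ℝ) ≤ ((m2 - δ : ℕ) : ℝ) := Nat.cast_nonneg _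
  have hdd : (d:ℝ) * (d:ℝ) ≤ (4*((m2 - δ:ℕ):ℝ)) * (4*((m2 - δ:ℕ):ℝ)) :=
    mul_le_mul hd4 hd4 (Nat.cast_nonneg _) (by positivity)
  nlinarith [mul_le_mul_of_nonneg_left hdd (show (0:ℝ) ≤ q^4 by positivity)]

end Frob

section Cpq'

lemma xpm_mem_Cpq (d δ : ℕ) (p q ε : ℝ) (hp : 0 < p) (hpq : p ≤ q) (hε : ε = 1 ∨ ε = -1) :
    xpm d δ p q ε ∈ Cpq d p q := by
  have hq : 0 < q := lt_of_lt_of_le hp hpq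
  simp only [Cpq, Set.mem_setOf_eq]
  intro n
  rw [xpm_eq, Complex.norm_real, Real.norm_eq_abs]
  unfold rpm
  rcases hε with rfl | rfl <;> split_ifs <;>
    [skip; skip; skip; skip; skip; skip; skip; skip] <;>
    first
      | (rw [one_mul, abs_of_nonneg (by linarith)]; exact ⟨by linarith, le_refl _⟩)
      | (rw [neg_one_mul, abs_neg, abs_of_nonneg (by linarith)]; exact ⟨by linarith, le_refl _⟩)
      | (rw [abs_of_nonneg (by linarith : (0:ℝ) ≤ q)]; exact ⟨by linarith, le_refl _⟩)
      | (rw [abs_of_nonneg (by linarith : (0:ℝ) ≤ p)]; exact ⟨le_refl _, by linarith⟩)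

end Cpq'
section Entry

set_option maxHeartbeats 1000000 in
lemma entry_bound (d δ a L : ℕ) (p q : ℝ) (hd : 0 < d) (hd2 : 1 < d) (heven : Even d)
    (hδd : 4*δ ≤ d) (ha : 0 < a) (hL : 0 < L) (hdal : d = a*L) (haδ : a < δ)
    (hp : 0 < p) (hpq : p ≤ q) (k : Fin (2*δ-1)) (ℓ : Fin L) :
    |Ymap L (twoShotMask d δ) a (xpm d δ p q 1) (k,ℓ)
      - Ymap L (twoShotMask d δ) a (xpm d δ p q (-1)) (k,ℓ)|
    ≤ if ((k:ℕ) % 2 = 1 ∧ (d/2 - δ ≤ d - ((ℓ:ℕ)+1)*a ∧ d - ((ℓ:ℕ)+1)*a < d/2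
        ∨ d - 2*δ ≤ d - ((ℓ:ℕ)+1)*a ∧ d - ((ℓ:ℕ)+1)*a < d - δ)) then 4*p*q else 0 := by
  have hδ2 : 2 ≤ δ := by omega
  obtain ⟨m2, hm2⟩ := heven
  have hkK : (k:ℕ) < 2*δ - 1 := k.2
  have hq : 0 < q := lt_of_lt_of_le hp hpq
  -- the shift amount
  set s : ℕ := ((ℓ:ℕ)+1)*a with hs
  have hsd : s ≤ d := by
    have h1 : (ℓ:ℕ)+1 ≤ L := ℓ.2
    calc s = ((ℓ:ℕ)+1)*a := hs
    _ ≤ L * a := Nat.mul_le_mul_right a h1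
    _ = a * L := Nat.mul_comm L a
    _ = d := hdal.symm
  have hs1 : 1 ≤ s := by
    have : 1*1 ≤ ((ℓ:ℕ)+1)*a := Nat.mul_le_mul (by omega) ha
    omega
  set μ : ℕ := d - s with hμ
  have hμd : μ < d := by omega
  -- main case split on parity of k
  rcases Nat.even_or_odd (k:ℕ) with hke | hko
  · -- even: difference is zero
    have hk0' : (k:ℕ) % 2 = 0 := Nat.even_iff.mp hke
    have hk0 : ¬ ((k:ℕ) % 2 = 1) := by omega
    rw [if_neg (by tauto)]
    have key : Ymap L (twoShotMask d δ) a (xpm d δ p q 1) (k,ℓ)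
        = Ymap L (twoShotMask d δ) a (xpm d δ p q (-1)) (k,ℓ)  := by
      rcases Nat.eq_zero_or_pos (k:ℕ) with hk00 | hkpos
      · -- k = 0
        have hcomp : ∀ ε : ℝ, Ymap L (twoShotMask d δ) a (xpm d δ p q ε) (k,ℓ)
            = (rpm d δ p q ε (intToFin d hd ((((⟨0, hd⟩ : Fin d) : ℕ):ℤ) - (s:ℤ))))^2 := by
          intro ε
          show ‖innerC (shift (((((ℓ:ℕ)) + 1) * a : ℕ) : ℤ) (twoShotMask d δ k))
            (xpm d δ p q ε)‖ ^ 2 = _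
          rw [innerC_shift hd, innerC_mask_zero hd hd2 k hk00]
          simp only [xpm_eq, Complex.conj_ofReal, Complex.sq_norm, Complex.normSq_ofReal]
          ring
        rw [hcomp 1, hcomp (-1)]
        exact rpm_sq d δ p q _
      · -- k even nonzero
        have hk2 : (k:ℕ) % 2 = 0 := by omega
        set j : ℕ := (k:ℕ)/2 with hj
        have hjd : j < d := by omega
        have hcomp : ∀ ε : ℝ, Ymap L (twoShotMask d δ) a (xpm d δ p q ε) (k,ℓ)
            = (rpm d δ p q ε (intToFin d hd ((((⟨0, hd⟩ : Fin d) : ℕ):ℤ) - (s:ℤ))))^2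
              + (rpm d δ p q ε (intToFin d hd ((((⟨j, hjd⟩ : Fin d) : ℕ):ℤ) - (s:ℤ))))^2 := by
          intro ε
          show ‖innerC (shift (((((ℓ:ℕ)) + 1) * a : ℕ) : ℤ) (twoShotMask d δ k))
            (xpm d δ p q ε)‖ ^ 2 = _
          rw [innerC_shift hd, innerC_mask_even hd k (by omega) hk2 hj hjd]
          simp only [xpm_eq, Complex.conj_ofReal]
          rw [abs_ofReal_add_I_sq]
        rw [hcomp 1, hcomp (-1), rpm_sq d δ p q, rpm_sq d δ p q]
    rw [key, sub_self, abs_zero]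
  · -- odd
    have hk1 : (k:ℕ) % 2 = 1 := Nat.odd_iff.mp hko
    set j : ℕ := ((k:ℕ)+1)/2 with hj
    have hj1 : 1 ≤ j := by omega
    have hjδ : j ≤ δ - 1 := by omega
    have hjd : j < d := by omega
    set ν0 : Fin d := intToFin d hd ((((⟨0, hd⟩ : Fin d) : ℕ):ℤ) - (s:ℤ)) with hν0def
    set νj : Fin d := intToFin d hd ((((⟨j, hjd⟩ : Fin d) : ℕ):ℤ) - (s:ℤ)) with hνjdef
    have hcomp : ∀ ε : ℝ, Ymap L (twoShotMask d δ) a (xpm d δ p q ε) (k,ℓ)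
        = (rpm d δ p q ε ν0 + rpm d δ p q ε νj)^2 := by
      intro ε
      show ‖innerC (shift (((((ℓ:ℕ)) + 1) * a : ℕ) : ℤ) (twoShotMask d δ k))
        (xpm d δ p q ε)‖ ^ 2 = _
      rw [innerC_shift hd, innerC_mask_odd hd k hk1 hj hjd]
      simp only [xpm_eq, Complex.conj_ofReal]
      rw [abs_ofReal_add_sq]
    rw [hcomp 1, hcomp (-1)]
    -- coordinates
    have c0 : (ν0 : ℕ) = μ := by
      apply intToFin_val d hd _ μ hμd (-1)
      simp only [Fin.val_mk]
      push_cast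
      omega
    have cj : ∀ hlt : μ + j < d, (νj : ℕ) = μ + j := by
      intro hlt
      apply intToFin_val d hd _ (μ+j) hlt (-1)
      simp only [Fin.val_mk]
      push_cast
      omega
    have cj' : ∀ hge : d ≤ μ + j, (νj : ℕ) = μ + j - d := by
      intro hge
      apply intToFin_val d hd _ (μ+j-d) (by omega) 0
      simp only [Fin.val_mk]
      push_cast
      omega
    by_cases hw : (d/2 - δ ≤ μ ∧ μ < d/2 ∨ d - 2*δ ≤ μ ∧ μ < d - δ)
    · rw [if_pos ⟨hk1, hw⟩]
      rcases hw with ⟨hw1, hw2⟩ | ⟨hw1, hw2⟩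
      · -- window 1 : ν0 in p-region R2
        have h0 : ∀ ε, rpm d δ p q ε ν0 = p := by
          intro ε
          exact rpm_R2 d δ p q ε ν0 (by omega) (by omega) (by omega)
        rw [h0 1, h0 (-1)]
        have hsqj := rpm_sq d δ p q νj
        have hA := rpm_abs_le d δ p q 1 hp.le hpq (Or.inl rfl) νj
        have hB := rpm_abs_le d δ p q (-1) hp.le hpq (Or.inr rfl) νj
        rw [abs_le] at hA hB ⊢
        constructor <;> nlinarith [hA.1, hA.2, hB.1, hB.2]
      · -- window 2 : ν0 in B
        have hm2' : d - 2*δ ≥ d/2 := by omega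
        have h0p : rpm d δ p q 1 ν0 = 1 * q := rpm_B d δ p q 1 ν0 (by omega) (by omega)
        have h0m : rpm d δ p q (-1) ν0 = (-1) * q := rpm_B d δ p q (-1) ν0 (by omega) (by omega)
        have hlt : μ + j < d := by omega
        have cjv := cj hlt
        rcases Nat.lt_or_ge (μ + j) (d - δ) with hc | hc
        · -- νj also in B
          have hjp : rpm d δ p q 1 νj = 1 * q := rpm_B d δ p q 1 νj (by omega) (by omega)
          have hjm : rpm d δ p q (-1) νj = (-1) * q := rpm_B d δ p q (-1) νj (by omega) (by omega)
          rw [h0p, h0m, hjp, hjm]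
          have : (1*q + 1*q)^2 - ((-1)*q + (-1)*q)^2 = 0 := by ring
          rw [this, abs_zero]
          positivity
        · -- νj in right p-region
          have hjp : rpm d δ p q 1 νj = p := rpm_R4 d δ p q 1 νj hδd (by omega)
          have hjm : rpm d δ p q (-1) νj = p := rpm_R4 d δ p q (-1) νj hδd (by omega)
          rw [h0p, h0m, hjp, hjm]
          have : (1*q + p)^2 - ((-1)*q + p)^2 = 4*p*q := by ring
          rw [this, abs_of_nonneg (by positivity)]
    · rw [if_neg (by tauto)]
      have hzero : (rpm d δ p q 1 ν0 + rpm d δ p q 1 νj)^2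
          - (rpm d δ p q (-1) ν0 + rpm d δ p q (-1) νj)^2 = 0 := by
        have hcases : μ < d/2 - δ ∨ (d/2 ≤ μ ∧ μ < d - 2*δ) ∨ d - δ ≤ μ := by omega
        rcases hcases with hc | ⟨hc1, hc2⟩ | hc
        · -- both outside B (left)
          have hlt : μ + j < d := by omega
          have cjv := cj hlt
          rw [rpm_notB d δ p q ν0 (by omega), rpm_notB d δ p q νj (by omega)]
          ring
        · -- both in B
          have hlt : μ + j < d := by omega
          have cjv := cj hlt
          rw [rpm_B d δ p q 1 ν0 (by omega) (by omega), rpm_B d δ p q (-1) ν0 (by omega) (by omega),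
            rpm_B d δ p q 1 νj (by omega) (by omega), rpm_B d δ p q (-1) νj (by omega) (by omega)]
          ring
        · -- both outside B (right / wrap)
          have h0 := rpm_notB d δ p q ν0 (by omega)
          rcases Nat.lt_or_ge (μ + j) d with hlt | hge
          · have cjv := cj hlt
            rw [h0, rpm_notB d δ p q νj (by omega)]
            ring
          · have cjv := cj' hge
            rw [h0, rpm_notB d δ p q νj (by omega)]
            ring
      rw [hzero, abs_zero]

end Entry
set_option maxHeartbeats 1600000 in
/-- Lower Lipschitz bound for recovery from the `Y`-measurements
with the two-shot masks. -/
theorem lower_lipschitz_Y_twoShot : ∃ C : ℝ, 0 < C ∧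
    ∀ (d δ a L : ℕ) (p q CA : ℝ)
      (A : EuclideanSpace ℝ (Fin (2 * δ - 1) × Fin L) → (Fin d → ℂ)),
      0 < d → Even d → 4 * δ ≤ d → 0 < a → 0 < L → d = a * L → 1 ≤ a → a < δ →
      0 < p → p ≤ q →
      (∀ y y', d1 (A y) (A y') ≤ CA * ‖y - y'‖) →
      (∀ x ∈ Cpq d p q, phaseEquiv (A (Ymap L (twoShotMask d δ) a x)) x) →
      C * q * (d : ℝ) * Real.sqrt a / (p * (δ : ℝ)) ≤ CA := by
  refine ⟨1/24, by norm_num, ?_⟩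
  intro d δ a L p q CA A hd heven hδd ha hL hdal ha1 haδ hp hpq hlip hrec
  have hδ2 : 2 ≤ δ := by omega
  have hd8 : 8 ≤ d := by omega
  have hd2 : 1 < d := by omega
  have hq : 0 < q := lt_of_lt_of_le hp hpq
  have hδpos : (0:ℝ) < (δ:ℝ) := by exact_mod_cast (by omega : 0 < δ)
  have hapos : (0:ℝ) < (a:ℝ) := by exact_mod_cast ha
  have hdpos : (0:ℝ) < (d:ℝ) := by exact_mod_cast hd
  set xP := xpm d δ p q 1 with hxP
  set xM := xpm d δ p q (-1) with hxM
  set yP := Ymap L (twoShotMask d δ) a xP with hyP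
  set yM := Ymap L (twoShotMask d δ) a xM with hyM
  obtain ⟨θ, hθ⟩ := hrec xP (xpm_mem_Cpq d δ p q 1 hp hpq (Or.inl rfl))
  obtain ⟨φ, hφ⟩ := hrec xM (xpm_mem_Cpq d δ p q (-1) hp hpq (Or.inr rfl))
  have hd1eq : d1 (A yP) (A yM) = d1 xP xM := by
    rw [hθ, hφ]
    exact d1_phase θ φ xP xM
  have hlow : q^2*(d:ℝ)/2 ≤ d1 xP xM := by
    have h1 := d1_ge_sqrt xP xM
    have h2 := frob_lower d δ p q hq heven hδd (by omega)
    calc q^2*(d:ℝ)/2 = Real.sqrt ((q^2*(d:ℝ)/2)^2) := (Real.sqrt_sq (by positivity)).symm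
    _ ≤ Real.sqrt (∑ i, ∑ j, Complex.normSq (outerDiff xP xM i j)) := Real.sqrt_le_sqrt h2
    _ ≤ d1 xP xM := h1
  -- norm bound
  have hnormsq : ‖yP - yM‖^2 ≤ 128*p^2*q^2*(δ:ℝ)^2/(a:ℝ) := by
    have hcomp : ∀ kl : Fin (2*δ-1) × Fin L, ‖(yP - yM) kl‖^2
        ≤ (if ((kl.1:ℕ) % 2 = 1 ∧ (d/2 - δ ≤ d - ((kl.2:ℕ)+1)*a ∧ d - ((kl.2:ℕ)+1)*a < d/2
            ∨ d - 2*δ ≤ d - ((kl.2:ℕ)+1)*a ∧ d - ((kl.2:ℕ)+1)*a < d - δ))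
            then (4*p*q)^2 else 0) := by
      intro kl
      have hb := entry_bound d δ a L p q hd hd2 heven hδd ha hL hdal haδ hp hpq kl.1 kl.2
      rw [PiLp.sub_apply, Real.norm_eq_abs]
      have h2 : |yP kl - yM kl|^2 ≤ (if ((kl.1:ℕ) % 2 = 1 ∧ (d/2 - δ ≤ d - ((kl.2:ℕ)+1)*a
            ∧ d - ((kl.2:ℕ)+1)*a < d/2
            ∨ d - 2*δ ≤ d - ((kl.2:ℕ)+1)*a ∧ d - ((kl.2:ℕ)+1)*a < d - δ))
            then 4*p*q else 0)^2 := pow_le_pow_left₀ (abs_nonneg _) hb 2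
      refine le_trans h2 (le_of_eq ?_)
      rw [apply_ite (fun t : ℝ => t^2)]
      norm_num
    have hsum0 : ‖yP - yM‖^2 = ∑ kl : Fin (2*δ-1) × Fin L, ‖(yP - yM) kl‖^2 := by
      rw [EuclideanSpace.norm_eq, Real.sq_sqrt]
      exact Finset.sum_nonneg (fun kl _ => by positivity)
    have hcard : ∀ k : Fin (2*δ-1),
        (∑ ℓ : Fin L, (if ((k:ℕ) % 2 = 1 ∧ (d/2 - δ ≤ d - ((ℓ:ℕ)+1)*a ∧ d - ((ℓ:ℕ)+1)*a < d/2
            ∨ d - 2*δ ≤ d - ((ℓ:ℕ)+1)*a ∧ d - ((ℓ:ℕ)+1)*a < d - δ))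
            then (4*p*q)^2 else 0))
          ≤ ((2*((δ-1)/a + 1) : ℕ) : ℝ) * (4*p*q)^2 := by
      intro k
      by_cases hk : (k:ℕ) % 2 = 1
      · simp only [hk, true_and]
        rw [sum_indicator_real]
        apply mul_le_mul_of_nonneg_right _ (by positivity)
        have hsplit : (Finset.univ.filter
            (fun ℓ : Fin L => (d/2 - δ ≤ d - ((ℓ:ℕ)+1)*a ∧ d - ((ℓ:ℕ)+1)*a < d/2
              ∨ d - 2*δ ≤ d - ((ℓ:ℕ)+1)*a ∧ d - ((ℓ:ℕ)+1)*a < d - δ))).card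
            ≤ 2*((δ-1)/a + 1) := by
          rw [Finset.filter_or]
          refine le_trans (Finset.card_union_le _ _) ?_
          have h1 := count_window d a L ha hdal (d/2 - δ) (d/2) δ (by omega) (by omega)
          have h2 := count_window d a L ha hdal (d - 2*δ) (d - δ) δ (by omega) (by omega)
          omega
        exact_mod_cast hsplit
      · simp only [hk, false_and, if_false, Finset.sum_const_zero]
        positivity
    have hcnt : ((2*((δ-1)/a + 1) : ℕ) : ℝ) ≤ 4*(δ:ℝ)/(a:ℝ) := by
      have hx : (((δ-1)/a : ℕ) : ℝ) ≤ (δ:ℝ)/(a:ℝ) := by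
        rw [le_div_iff₀ hapos]
        have h := le_trans (Nat.div_mul_le_self (δ-1) a) (show δ - 1 ≤ δ by omega)
        exact_mod_cast h
      have h1 : (1:ℝ) ≤ (δ:ℝ)/(a:ℝ) := by
        rw [le_div_iff₀ hapos, one_mul]
        exact_mod_cast (by omega : a ≤ δ)
      have h4 : 4*(δ:ℝ)/(a:ℝ) = 4*((δ:ℝ)/(a:ℝ)) := by ring
      rw [h4]
      push_cast
      linarith
    calc ‖yP - yM‖^2 = ∑ kl : Fin (2*δ-1) × Fin L, ‖(yP - yM) kl‖^2 := hsum0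
    _ ≤ ∑ kl : Fin (2*δ-1) × Fin L,
        (if ((kl.1:ℕ) % 2 = 1 ∧ (d/2 - δ ≤ d - ((kl.2:ℕ)+1)*a ∧ d - ((kl.2:ℕ)+1)*a < d/2
            ∨ d - 2*δ ≤ d - ((kl.2:ℕ)+1)*a ∧ d - ((kl.2:ℕ)+1)*a < d - δ))
            then (4*p*q)^2 else 0) := Finset.sum_le_sum (fun kl _ => hcomp kl)
    _ = ∑ k : Fin (2*δ-1), ∑ ℓ : Fin L,
        (if ((k:ℕ) % 2 = 1 ∧ (d/2 - δ ≤ d - ((ℓ:ℕ)+1)*a ∧ d - ((ℓ:ℕ)+1)*a < d/2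
            ∨ d - 2*δ ≤ d - ((ℓ:ℕ)+1)*a ∧ d - ((ℓ:ℕ)+1)*a < d - δ))
            then (4*p*q)^2 else 0) := Fintype.sum_prod_type _
    _ ≤ ∑ _k : Fin (2*δ-1), ((2*((δ-1)/a + 1) : ℕ) : ℝ) * (4*p*q)^2 :=
        Finset.sum_le_sum (fun k _ => hcard k)
    _ = ((2*δ-1 : ℕ) : ℝ) * (((2*((δ-1)/a + 1) : ℕ) : ℝ) * (4*p*q)^2) := by
        rw [Finset.sum_const, Finset.card_univ, Fintype.card_fin, nsmul_eq_mul]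
    _ ≤ (2*(δ:ℝ)) * ((4*(δ:ℝ)/(a:ℝ)) * (4*p*q)^2) := by
        apply mul_le_mul
        · have hn : (2*δ-1 : ℕ) ≤ 2*δ := by omega
          calc ((2*δ-1 : ℕ):ℝ) ≤ ((2*δ : ℕ):ℝ) := by exact_mod_cast hn
          _ = 2*(δ:ℝ) := by push_cast; ring
        · exact mul_le_mul_of_nonneg_right hcnt (by positivity)
        · positivity
        · positivity
    _ = 128*p^2*q^2*(δ:ℝ)^2/(a:ℝ) := by
        field_simp
        ring
  have hnorm : Real.sqrt a * ‖yP - yM‖ ≤ 12*p*q*(δ:ℝ) := by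
    rw [← pow_le_pow_iff_left₀ (by positivity) (by positivity) (two_ne_zero)]
    have hsq : (Real.sqrt a * ‖yP - yM‖)^2 = (a:ℝ) * ‖yP - yM‖^2 := by
      rw [mul_pow, Real.sq_sqrt hapos.le]
    rw [hsq]
    calc (a:ℝ) * ‖yP - yM‖^2 ≤ (a:ℝ) * (128*p^2*q^2*(δ:ℝ)^2/(a:ℝ)) :=
          mul_le_mul_of_nonneg_left hnormsq hapos.le
    _ = 128*p^2*q^2*(δ:ℝ)^2 := by field_simp
    _ ≤ (12*p*q*(δ:ℝ))^2 := by nlinarith [sq_nonneg (p*q*(δ:ℝ))]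
  have hchain : q^2*(d:ℝ)/2 ≤ CA * ‖yP - yM‖ := by
    calc q^2*(d:ℝ)/2 ≤ d1 xP xM := hlow
    _ = d1 (A yP) (A yM) := hd1eq.symm
    _ ≤ CA * ‖yP - yM‖ := hlip yP yM
  have hCA : 0 < CA := by
    rcases lt_or_ge 0 CA with h | h
    · exact h
    · exfalso
      have h1 : CA * ‖yP - yM‖ ≤ 0 := mul_nonpos_of_nonpos_of_nonneg h (norm_nonneg _)
      have h2 : (0:ℝ) < q^2*(d:ℝ)/2 := by positivity
      linarith
  rw [div_le_iff₀ (by positivity)]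
  have key : Real.sqrt a * (q^2*(d:ℝ)/2) ≤ CA * (12*p*q*(δ:ℝ)) := by
    calc Real.sqrt a * (q^2*(d:ℝ)/2) ≤ Real.sqrt a * (CA * ‖yP - yM‖) :=
          mul_le_mul_of_nonneg_left hchain (Real.sqrt_nonneg _)
    _ = CA * (Real.sqrt a * ‖yP - yM‖) := by ring
    _ ≤ CA * (12*p*q*(δ:ℝ)) := mul_le_mul_of_nonneg_left hnorm hCA.le
  nlinarith [key, Real.sqrt_nonneg (a:ℝ), mul_pos hq hdpos]
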